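/- Let F ∈ ℤ[x₀,…,xₙ] be a non-degenerate cubic form such that the projective hypersurface {F = 0} ⊆ ℙⁿ(ℂ) is smooth (the only common zero in ℂ^{n+1} of ∂₀F,…,∂ₙF is the origin), and fix a nonzero integer r. Then there exist finitely many pairs (a₁,G₁),…,(a_k,G_k) ∈ ℤ × ℤ[x₁,…,xₙ]₃ such that for every integer (n+1)×(n+1) matrix T with det T = r for which T·F = a·x₀³ + G(x₁,…,xₙ) for some a ∈ ℤ and some non-degenerate cubic form G ∈ ℤ[x₁,…,xₙ], there exist i ∈ {1,…,k} and M ∈ SL(n,ℤ) with a = a_i and G = M·G_i. Moreover, for each i the projective hypersurface {G_i = 0} ⊆ ℙ^{n−1}(ℂ) is smooth. -/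

import Mathlib

open MvPolynomial

noncomputable section

/-- The Hessian matrix of a multivariate polynomial `F`, evaluated at the point `x`. -/
def hess {m : ℕ} {R : Type*} [CommSemiring R] (F : MvPolynomial (Fin m) R)
    (x : Fin m → R) : Matrix (Fin m) (Fin m) R :=
  Matrix.of fun i j => eval x (pderiv i (pderiv j F))

/-- A polynomial is non-degenerate if the determinant of its Hessian is not
identically zero. -/
def nondeg {m : ℕ} {R : Type*} [CommRing R] (F : MvPolynomial (Fin m) R) : Prop :=
  ∃ x, (hess F x).det ≠ 0

/-- The substitution action of a matrix on a polynomial: `(T · F)(x) = F (T.mulVec x)`. -/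
def matAct {m : ℕ} {R : Type*} [CommSemiring R] (T : Matrix (Fin m) (Fin m) R)
    (F : MvPolynomial (Fin m) R) : MvPolynomial (Fin m) R :=
  bind₁ (fun i => ∑ j, C (T i j) * X j) F

/-- The projective hypersurface `{F = 0}` is smooth: the only common zero of the
partial derivatives of `F` is the origin. -/
def smoothHyp {m : ℕ} (F : MvPolynomial (Fin m) ℂ) : Prop :=
  ∀ x : Fin m → ℂ, (∀ i, eval x (pderiv i F) = 0) → x = 0

/-- The polynomial `a·x₀³ + x₀²·(∑ᵢ bᵢ xᵢ) + G(x₁, …, xₙ)`. -/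
def redPoly {m : ℕ} {R : Type*} [CommSemiring R] (a : R) (B : Fin m → R)
    (G : MvPolynomial (Fin m) R) : MvPolynomial (Fin (m + 1)) R :=
  C a * X 0 ^ 3 + X 0 ^ 2 * (∑ i, C (B i) * X i.succ) + rename Fin.succ G

/-- `(a, B, G)` is a reduced triple associated to `F`: `G` is a non-degenerate
cubic form and some `T ∈ SL(n+1, ℤ)` puts `F` in the reduced form `(a, B, G)`. -/
def IsReducedTriple {n : ℕ} (F : MvPolynomial (Fin (n + 1)) ℤ)
    (a : ℤ) (B : Fin n → ℤ) (G : MvPolynomial (Fin n) ℤ) : Prop :=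
  G.IsHomogeneous 3 ∧ nondeg G ∧
    ∃ T : Matrix (Fin (n + 1)) (Fin (n + 1)) ℤ, T.det = 1 ∧ matAct T F = redPoly a B G

/-- Equivalence of reduced triples over ℤ: `a = a'` and some `M ∈ SL(n, ℤ)`
carries `(B, G)` to `(B', G')`. -/
def TripleEquiv {n : ℕ} (a : ℤ) (B : Fin n → ℤ) (G : MvPolynomial (Fin n) ℤ)
    (a' : ℤ) (B' : Fin n → ℤ) (G' : MvPolynomial (Fin n) ℤ) : Prop :=
  a = a' ∧ ∃ M : Matrix (Fin n) (Fin n) ℤ, M.det = 1 ∧ B' = M.mulVec B ∧ G' = matAct M G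

-- ==================== auxiliary lemmas ====================

namespace Stmt12Aux

variable {m n : ℕ} {R S : Type*}

lemma matAct_add [CommSemiring R] (T : Matrix (Fin m) (Fin m) R)
    (p q : MvPolynomial (Fin m) R) : matAct T (p + q) = matAct T p + matAct T q := by
  unfold matAct; rw [map_add]

lemma matAct_matAct [CommSemiring R] (T S' : Matrix (Fin m) (Fin m) R)
    (P : MvPolynomial (Fin m) R) :
    matAct S' (matAct T P) = matAct (T * S') P := by
  unfold matAct
  rw [bind₁_bind₁]
  have h : (fun i => (bind₁ fun i => ∑ j : Fin m, C (S' i j) * X j)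
      (∑ j : Fin m, C (T i j) * X j)) =
      fun i => ∑ j : Fin m, C ((T * S') i j) * (X j : MvPolynomial (Fin m) R) := by
    funext i
    simp only [map_sum, map_mul, bind₁_C_right, bind₁_X_right, Matrix.mul_apply]
    simp_rw [Finset.mul_sum]
    rw [Finset.sum_comm]
    refine Finset.sum_congr rfl fun j _ => ?_
    rw [Finset.sum_mul]
    refine Finset.sum_congr rfl fun x _ => ?_
    rw [← mul_assoc, ← C_mul]
  rw [h]

lemma map_matAct [CommSemiring R] [CommSemiring S] (f : R →+* S)
    (T : Matrix (Fin m) (Fin m) R) (P : MvPolynomial (Fin m) R) :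
    map f (matAct T P) = matAct (T.map f) (map f P) := by
  unfold matAct
  rw [map_bind₁]
  have h : (fun i => (map f) (∑ j : Fin m, C (T i j) * X j)) =
      fun i => ∑ j : Fin m, C (T.map f i j) * (X j : MvPolynomial (Fin m) S) := by
    funext i
    simp [Matrix.map_apply]
  rw [h]

lemma matAct_isHomogeneous [CommSemiring R] (T : Matrix (Fin m) (Fin m) R)
    {P : MvPolynomial (Fin m) R} {d : ℕ} (h : P.IsHomogeneous d) :
    (matAct T P).IsHomogeneous d := by
  have := IsHomogeneous.aeval (n := 1) h (fun i => ∑ j, C (T i j) * X j)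
    (fun i => IsHomogeneous.sum _ _ 1 fun j _ => isHomogeneous_C_mul_X _ _)
  simp only [one_mul] at this
  exact this

lemma pderiv_matAct [CommSemiring R] (T : Matrix (Fin m) (Fin m) R)
    (P : MvPolynomial (Fin m) R) (i : Fin m) :
    pderiv i (matAct T P) = ∑ k, C (T k i) * matAct T (pderiv k P) := by
  induction P using MvPolynomial.induction_on with
  | C a =>
      simp [matAct, pderiv_C]
  | add p q hp hq =>
      simp only [matAct_add, map_add, hp, hq]
      rw [← Finset.sum_add_distrib]
      refine Finset.sum_congr rfl fun k _ => (mul_add _ _ _).symm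
  | mul_X p j hp =>
      have hact : ∀ q : MvPolynomial (Fin m) R,
          matAct T (q * X j) = matAct T q * (∑ l, C (T j l) * X l) := by
        intro q; unfold matAct; rw [map_mul, bind₁_X_right]
      rw [hact, pderiv_mul, hp]
      have hd : pderiv i (∑ l, C (T j l) * X l) = C (T j i) := by
        rw [map_sum]
        rw [Finset.sum_eq_single i]
        · rw [pderiv_C_mul, pderiv_X_self, mul_one]
        · intro l _ hl
          rw [pderiv_C_mul, pderiv_X_of_ne hl, mul_zero]
        · intro h; exact absurd (Finset.mem_univ i) h
      rw [hd]
      have hpd : ∀ k, pderiv k (p * X j) = pderiv k p * X j + if k = j then p else 0 := by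
        intro k
        rw [pderiv_mul]
        by_cases hk : k = j
        · subst hk; simp
        · simp [pderiv_X_of_ne (Ne.symm hk), hk]
      have hrw : ∀ k, matAct T (pderiv k (p * X j)) =
          matAct T (pderiv k p) * (∑ l, C (T j l) * X l) +
            if k = j then matAct T p else 0 := by
        intro k
        rw [hpd k, matAct_add, hact]
        congr 1
        by_cases hk : k = j <;> simp [hk, matAct]
      simp only [hrw, mul_add, Finset.sum_add_distrib]
      congr 1
      · rw [Finset.sum_mul]
        exact Finset.sum_congr rfl fun k _ => (mul_assoc _ _ _)
      · rw [Finset.sum_eq_single j]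
        · simp [mul_comm]
        · intro l _ hl; simp [hl]
        · intro h; exact absurd (Finset.mem_univ j) h





lemma eval_matAct [CommSemiring R] (T : Matrix (Fin m) (Fin m) R)
    (P : MvPolynomial (Fin m) R) (x : Fin m → R) :
    eval x (matAct T P) = eval (T.mulVec x) P := by
  induction P using MvPolynomial.induction_on with
  | C a => simp [matAct]
  | add p q hp hq => simp [matAct_add, hp, hq]
  | mul_X p j hp =>
      have hact : matAct T (p * X j) = matAct T p * (∑ l, C (T j l) * X l) := by
        unfold matAct; rw [map_mul, bind₁_X_right]
      rw [hact, map_mul, hp, map_mul, eval_X]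
      congr 1
      simp [Matrix.mulVec, dotProduct]

lemma hess_matAct [CommSemiring R] (T : Matrix (Fin m) (Fin m) R)
    (P : MvPolynomial (Fin m) R) (x : Fin m → R) :
    hess (matAct T P) x = T.transpose * hess P (T.mulVec x) * T := by
  ext i j
  simp only [hess, Matrix.of_apply]
  have expand : pderiv i (pderiv j (matAct T P)) =
      ∑ k, ∑ l, C (T k j) * C (T l i) * matAct T (pderiv l (pderiv k P)) := by
    rw [pderiv_matAct, map_sum]
    refine Finset.sum_congr rfl fun k _ => ?_
    rw [pderiv_C_mul, pderiv_matAct, Finset.mul_sum]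
    refine Finset.sum_congr rfl fun l _ => ?_
    ring
  rw [expand, map_sum]
  simp_rw [map_sum, map_mul, eval_C, eval_matAct]
  simp_rw [Matrix.mul_apply, Matrix.transpose_apply, Finset.sum_mul]
  refine Finset.sum_congr rfl fun k _ => Finset.sum_congr rfl fun l _ => ?_
  simp only [hess, Matrix.of_apply]
  ring

lemma degree_sub_single {σ : Type*} (s : σ →₀ ℕ) (i : σ) (h : s i ≠ 0) :
    (s - Finsupp.single i 1).degree + 1 = s.degree := by
  have hadd : ∀ a b : σ →₀ ℕ, (a + b).degree = a.degree + b.degree := by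
    intro a b
    simp only [Finsupp.degree_eq_weight_one, map_add]
  have hsplit : (s - Finsupp.single i 1) + Finsupp.single i 1 = s := by
    ext j
    by_cases hj : j = i
    · subst hj
      simp only [Finsupp.add_apply, Finsupp.tsub_apply, Finsupp.single_eq_same]
      omega
    · simp [Finsupp.single_eq_of_ne (Ne.symm hj), hj]
  have hsingle : (Finsupp.single i 1).degree = 1 := by
    simp only [Finsupp.degree_eq_weight_one, Finsupp.weight_apply]
    rw [Finsupp.sum_single_index] <;> simp
  calc (s - Finsupp.single i 1).degree + 1
      = (s - Finsupp.single i 1).degree + (Finsupp.single i 1).degree := by rw [hsingle]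
    _ = ((s - Finsupp.single i 1) + Finsupp.single i 1).degree := (hadd _ _).symm
    _ = s.degree := by rw [hsplit]

lemma isHomogeneous_pderiv {σ : Type*} [CommSemiring R] {P : MvPolynomial σ R} {d : ℕ}
    (h : P.IsHomogeneous d) (i : σ) : (pderiv i P).IsHomogeneous (d - 1) := by
  rw [← support_sum_monomial_coeff P, map_sum]
  apply IsHomogeneous.sum
  intro s hs
  rw [pderiv_monomial]
  by_cases hsi : s i = 0
  · rw [hsi]
    simp only [Nat.cast_zero, mul_zero, monomial_zero]
    exact isHomogeneous_zero _ _ _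
  · apply isHomogeneous_monomial
    have hdeg : s.degree = d := by
      by_contra hne
      exact (MvPolynomial.mem_support_iff.mp hs) (h.coeff_eq_zero hne)
    have := degree_sub_single s i hsi
    omega

lemma eval_zero_of_homog {σ : Type*} [CommSemiring R] {P : MvPolynomial σ R} {d : ℕ}
    (h : P.IsHomogeneous d) (hd : d ≠ 0) : eval (fun _ => (0 : R)) P = 0 := by
  have h0 : (fun _ => (0:R)) = (0 : σ → R) := rfl
  rw [h0, eval_zero]
  have : (0 : σ →₀ ℕ).degree ≠ d := by simpa using (Ne.symm hd)
  rw [constantCoeff_eq]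
  simpa using h.coeff_eq_zero this


def cForm [CommSemiring R] (a : R) (G : MvPolynomial (Fin n) R) :
    MvPolynomial (Fin (n + 1)) R :=
  C a * X 0 ^ 3 + rename Fin.succ G

lemma pderiv_zero_rename_succ [CommSemiring R] (G : MvPolynomial (Fin n) R) :
    pderiv (0 : Fin (n+1)) (rename Fin.succ G) = 0 := by
  apply pderiv_eq_zero_of_notMem_vars
  intro hmem
  obtain ⟨i, _, hi⟩ := Finset.mem_image.mp (vars_rename _ _ hmem)
  exact Fin.succ_ne_zero i hi

lemma pderiv_succ_rename_succ [CommSemiring R] (G : MvPolynomial (Fin n) R) (i : Fin n) :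
    pderiv i.succ (rename Fin.succ G) = rename Fin.succ (pderiv i G) :=
  pderiv_rename (Fin.succ_injective n) i G

lemma CX3_eq_monomial [CommSemiring R] (a : R) :
    C a * (X (0 : Fin (n+1)) : MvPolynomial (Fin (n+1)) R) ^ 3
      = monomial (Finsupp.single 0 3) a := by
  rw [MvPolynomial.C_mul_X_pow_eq_monomial]

lemma pderiv_monomial_single0 [CommSemiring R] (a : R) (k : ℕ) :
    pderiv (0 : Fin (n+1)) (monomial (Finsupp.single (0 : Fin (n+1)) (k+1)) a)
      = monomial (Finsupp.single 0 k) (a * ((k+1 : ℕ) : R)) := by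
  have hsub : (Finsupp.single (0 : Fin (n+1)) (k+1)) - Finsupp.single 0 1
      = Finsupp.single 0 k := by
    ext j
    by_cases hj : j = 0
    · subst hj; simp
    · simp [Finsupp.single_eq_of_ne (Ne.symm hj)]
  rw [pderiv_monomial, hsub, Finsupp.single_eq_same]

lemma pderiv_succ_monomial_single0 [CommSemiring R] (a : R) (k : ℕ) (i : Fin n) :
    pderiv i.succ (monomial (Finsupp.single (0 : Fin (n+1)) k) a) = 0 := by
  rw [pderiv_monomial]
  have : (Finsupp.single (0 : Fin (n+1)) k) i.succ = 0 :=
    Finsupp.single_eq_of_ne' (Ne.symm (Fin.succ_ne_zero i))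
  rw [this]
  simp

lemma pderiv_cForm_zero [CommSemiring R] (a : R) (G : MvPolynomial (Fin n) R) :
    pderiv (0 : Fin (n+1)) (cForm a G)
      = monomial (Finsupp.single 0 2) (a * ((3:ℕ) : R)) := by
  unfold cForm
  rw [CX3_eq_monomial, map_add, pderiv_zero_rename_succ, add_zero,
    show (3:ℕ) = 2 + 1 from rfl, pderiv_monomial_single0]

lemma pderiv_cForm_succ [CommSemiring R] (a : R) (G : MvPolynomial (Fin n) R) (i : Fin n) :
    pderiv i.succ (cForm a G) = rename Fin.succ (pderiv i G) := by
  unfold cForm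
  rw [CX3_eq_monomial, map_add, pderiv_succ_monomial_single0, zero_add,
    pderiv_succ_rename_succ]

lemma hess_cForm_00 [CommSemiring R] (a : R) (G : MvPolynomial (Fin n) R) (x : Fin (n+1) → R) :
    hess (cForm a G) x 0 0 = 6 * a * x 0 := by
  simp only [hess, Matrix.of_apply]
  rw [pderiv_cForm_zero, show (2:ℕ) = 1 + 1 from rfl, pderiv_monomial_single0,
    eval_monomial, Finsupp.prod_single_index (by simp)]
  push_cast
  ring

lemma hess_cForm_0succ [CommSemiring R] (a : R) (G : MvPolynomial (Fin n) R)
    (x : Fin (n+1) → R) (j : Fin n) :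
    hess (cForm a G) x 0 j.succ = 0 := by
  simp only [hess, Matrix.of_apply]
  rw [pderiv_cForm_succ, pderiv_zero_rename_succ]
  simp

lemma hess_cForm_succ0 [CommSemiring R] (a : R) (G : MvPolynomial (Fin n) R)
    (x : Fin (n+1) → R) (i : Fin n) :
    hess (cForm a G) x i.succ 0 = 0 := by
  simp only [hess, Matrix.of_apply]
  rw [pderiv_cForm_zero, pderiv_succ_monomial_single0]
  simp

lemma hess_cForm_succsucc [CommSemiring R] (a : R) (G : MvPolynomial (Fin n) R)
    (x : Fin (n+1) → R) (i j : Fin n) :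
    hess (cForm a G) x i.succ j.succ = hess G (x ∘ Fin.succ) i j := by
  simp only [hess, Matrix.of_apply]
  rw [pderiv_cForm_succ, pderiv_succ_rename_succ, eval_rename]

lemma hess_zero_of_homog3 [CommSemiring R] {G : MvPolynomial (Fin n) R}
    (hG : G.IsHomogeneous 3) : hess G (fun _ => (0:R)) = 0 := by
  ext i j
  simp only [hess, Matrix.of_apply, Matrix.zero_apply]
  have h1 : (pderiv j G).IsHomogeneous 2 := isHomogeneous_pderiv hG j
  have h2 : (pderiv i (pderiv j G)).IsHomogeneous 1 := isHomogeneous_pderiv h1 i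
  exact eval_zero_of_homog h2 one_ne_zero

lemma map_cForm [CommSemiring R] [CommSemiring S] (f : R →+* S) (a : R)
    (G : MvPolynomial (Fin n) R) :
    map f (cForm a G) = cForm (f a) (map f G) := by
  simp [cForm, map_rename]

lemma cForm_eq_iff [CommRing R] {a b : R} {Gc Gd : MvPolynomial (Fin n) R}
    (h : cForm a Gc = cForm b Gd) : a = b ∧ Gc = Gd := by
  have hcoeff : ∀ (c : R) (Q : MvPolynomial (Fin n) R),
      coeff (Finsupp.single 0 3) (cForm c Q) = c := by
    intro c Q
    unfold cForm
    rw [coeff_add, CX3_eq_monomial, coeff_monomial, if_pos rfl]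
    rw [coeff_rename_eq_zero]
    · ring
    · intro u hu
      exfalso
      have h0 : Finsupp.mapDomain Fin.succ u 0 = 0 :=
        Finsupp.mapDomain_notin_range u 0 (by
          rintro ⟨i, hi⟩; exact Fin.succ_ne_zero i hi)
      rw [hu] at h0
      simp at h0
  have hab : a = b := by
    have := congrArg (coeff (Finsupp.single 0 3)) h
    rwa [hcoeff, hcoeff] at this
  refine ⟨hab, ?_⟩
  apply rename_injective Fin.succ (Fin.succ_injective n)
  have := h
  unfold cForm at this
  rw [hab] at this
  exact add_left_cancel this

lemma vecMul_eq_zero_of_det_ne_zero {l : ℕ} {R : Type*} [CommRing R] [IsDomain R]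
    {c : Fin l → R} {H : Matrix (Fin l) (Fin l) R} (hdet : H.det ≠ 0)
    (h : Matrix.vecMul c H = 0) : c = 0 := by
  have h2 : Matrix.vecMul (Matrix.vecMul c H) H.adjugate = 0 := by
    rw [h, Matrix.zero_vecMul]
  rw [Matrix.vecMul_vecMul, Matrix.mul_adjugate] at h2
  have hsm : Matrix.vecMul c (H.det • (1 : Matrix (Fin l) (Fin l) R)) = H.det • c := by
    funext i
    simp [Matrix.vecMul, dotProduct, Matrix.smul_apply, Matrix.one_apply,
      mul_ite, Finset.sum_ite_eq', mul_comm]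
  rw [hsm] at h2
  funext i
  have := congrFun h2 i
  simp only [Pi.smul_apply, smul_eq_mul, Pi.zero_apply] at this
  rcases mul_eq_zero.mp this with h' | h'
  · exact absurd h' hdet
  · simpa using h'

lemma mulVec_eq_zero_of_det_ne_zero {l : ℕ} {R : Type*} [CommRing R] [IsDomain R]
    {c : Fin l → R} {H : Matrix (Fin l) (Fin l) R} (hdet : H.det ≠ 0)
    (h : Matrix.mulVec H c = 0) : c = 0 := by
  have h2 : Matrix.mulVec H.adjugate (Matrix.mulVec H c) = 0 := by
    rw [h, Matrix.mulVec_zero]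
  rw [Matrix.mulVec_mulVec, Matrix.adjugate_mul] at h2
  funext i
  have := congrFun h2 i
  rw [Matrix.smul_mulVec, Matrix.one_mulVec] at this
  simp only [Pi.smul_apply, smul_eq_mul, Pi.zero_apply] at this
  rcases mul_eq_zero.mp this with h' | h'
  · exact absurd h' hdet
  · simpa using h'

lemma smoothHyp_matAct {T : Matrix (Fin m) (Fin m) ℂ} (hT : T.det ≠ 0)
    {P : MvPolynomial (Fin m) ℂ} (h : smoothHyp P) : smoothHyp (matAct T P) := by
  intro x hx
  have hsum : ∀ i, ∑ k, T k i * eval (T.mulVec x) (pderiv k P) = 0 := by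
    intro i
    have hxi := hx i
    rw [pderiv_matAct, map_sum] at hxi
    simpa [eval_matAct] using hxi
  set w := fun k => eval (T.mulVec x) (pderiv k P) with hw
  have hvm : Matrix.vecMul w T = 0 := by
    funext i
    have h1 : Matrix.vecMul w T i = ∑ k, T k i * w k := by
      simp [Matrix.vecMul, dotProduct, mul_comm]
    rw [h1]
    exact hsum i
  have hw0 : w = 0 := vecMul_eq_zero_of_det_ne_zero hT hvm
  have hTx : T.mulVec x = 0 := h _ (fun k => congrFun hw0 k)
  exact mulVec_eq_zero_of_det_ne_zero hT hTx

lemma cForm_smooth {a : ℂ} {G : MvPolynomial (Fin n) ℂ} (hG : G.IsHomogeneous 3)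
    (hs : smoothHyp (cForm a G)) : a ≠ 0 ∧ smoothHyp G := by
  have hpd0 := pderiv_cForm_zero (R := ℂ) a G
  have hpds := pderiv_cForm_succ (R := ℂ) a G
  constructor
  · intro ha
    have hx : ∀ i, eval (fun j : Fin (n+1) => if j = 0 then (1:ℂ) else 0)
        (pderiv i (cForm a G)) = 0 := by
      intro i
      refine Fin.cases ?_ ?_ i
      · rw [hpd0, ha, eval_monomial]; simp
      · intro i
        rw [hpds _, eval_rename]
        have hcomp : ((fun j : Fin (n+1) => if j = 0 then (1:ℂ) else 0) ∘ Fin.succ)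
            = fun _ => (0:ℂ) := by
          funext j
          simp [Fin.succ_ne_zero j]
        rw [hcomp]
        exact eval_zero_of_homog (isHomogeneous_pderiv hG i) two_ne_zero
    have := hs _ hx
    have h0 := congrFun this 0
    simp at h0
  · intro x' hx'
    have hx : ∀ i, eval (Fin.cons 0 x') (pderiv i (cForm a G)) = 0 := by
      intro i
      refine Fin.cases ?_ ?_ i
      · rw [hpd0, eval_monomial]
        rw [Finsupp.prod_single_index]
        · simp [Fin.cons_zero]
        · simp
      · intro i
        rw [hpds _, eval_rename]
        have hcomp : (Fin.cons (0:ℂ) x' ∘ Fin.succ) = x' := by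
          funext j; simp [Fin.cons_succ]
        rw [hcomp]
        exact hx' i
    have := hs _ hx
    funext j
    have := congrFun this j.succ
    simpa [Fin.cons_succ] using this


lemma sum_head_of_succ_zero {A : Type*} [AddCommMonoid A] {f : Fin (n+1) → A}
    (h : ∀ i : Fin n, f i.succ = 0) : ∑ i, f i = f 0 := by
  rw [Fin.sum_univ_succ]
  simp [h]

lemma sum_tail_of_head_zero {A : Type*} [AddCommMonoid A] {f : Fin (n+1) → A}
    (h : f 0 = 0) : ∑ i, f i = ∑ i : Fin n, f i.succ := by
  rw [Fin.sum_univ_succ, h, zero_add]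

lemma core {n : ℕ} (a₀ a' : ℤ) (G₀ G' : MvPolynomial (Fin n) ℤ)
    (γ : Matrix (Fin (n+1)) (Fin (n+1)) ℤ) (hdet : γ.det = 1) (hl0 : γ 0 0 ≠ 0)
    (ha₀ : a₀ ≠ 0) (hG₀3 : G₀.IsHomogeneous 3) (hndG₀ : nondeg G₀)
    (heq : matAct γ (cForm a₀ G₀) = cForm a' G') :
    ∃ (l : ℤ) (M : Matrix (Fin n) (Fin n) ℤ), (l = 1 ∨ l = -1) ∧ M.det = l ∧
      a' = l * a₀ ∧ G' = matAct M G₀ := by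
  set l := γ 0 0 with hldef
  -- the fundamental Hessian identity
  have hid : ∀ x, γ.transpose * hess (cForm a₀ G₀) (γ.mulVec x) * γ
      = hess (cForm a' G') x := by
    intro x
    rw [← hess_matAct, heq]
  have hsub : ∀ y : Fin (n+1) → ℤ, γ.mulVec (γ.adjugate.mulVec y) = y := by
    intro y
    rw [Matrix.mulVec_mulVec, Matrix.mul_adjugate, hdet, one_smul, Matrix.one_mulVec]
  have hid' : ∀ y, γ.transpose * hess (cForm a₀ G₀) y * γ
      = hess (cForm a' G') (γ.adjugate.mulVec y) := by
    intro y
    have := hid (γ.adjugate.mulVec y)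
    rwa [hsub] at this
  have hentry : ∀ (A : Matrix (Fin (n+1)) (Fin (n+1)) ℤ) (i j : Fin (n+1)),
      (γ.transpose * A * γ) i j = ∑ k, ∑ p, γ k i * A k p * γ p j := by
    intro A i j
    rw [Matrix.mul_apply]
    simp_rw [Matrix.mul_apply, Matrix.transpose_apply, Finset.sum_mul]
    exact Finset.sum_comm
  -- step 1 : the first row of γ away from (0,0) vanishes
  set e0 : Fin (n+1) → ℤ := fun i => if i = 0 then 1 else 0 with he0
  have he0succ : (e0 ∘ Fin.succ) = fun _ => (0:ℤ) := by
    funext i; simp [he0, Fin.succ_ne_zero i]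
  have hA : ∀ i j, hess (cForm a₀ G₀) e0 i j
      = if i = 0 ∧ j = 0 then 6 * a₀ else 0 := by
    intro i j
    refine Fin.cases ?_ ?_ i
    · refine Fin.cases ?_ ?_ j
      · rw [hess_cForm_00]; simp [he0]
      · intro q; rw [hess_cForm_0succ]; simp [Fin.succ_ne_zero q]
    · intro p
      refine Fin.cases ?_ ?_ j
      · rw [hess_cForm_succ0]; simp [Fin.succ_ne_zero p]
      · intro q
        rw [hess_cForm_succsucc, he0succ, hess_zero_of_homog3 hG₀3]
        simp [Fin.succ_ne_zero p]
  have hsumA : ∀ i' j' : Fin (n+1),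
      (∑ k, ∑ p, γ k i' * hess (cForm a₀ G₀) e0 k p * γ p j')
        = γ 0 i' * (6 * a₀) * γ 0 j' := by
    intro i' j'
    rw [sum_head_of_succ_zero (fun p => ?_)]
    · rw [sum_head_of_succ_zero (fun q => ?_)]
      · rw [hA]; simp
      · rw [hA]; simp [Fin.succ_ne_zero q]
    · apply Finset.sum_eq_zero
      intro q _
      rw [hA]
      simp [Fin.succ_ne_zero p]
  have hv : ∀ j : Fin n, γ 0 j.succ = 0 := by
    intro j
    have h1 : (γ.transpose * hess (cForm a₀ G₀) e0 * γ) 0 j.succ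
        = hess (cForm a' G') (γ.adjugate.mulVec e0) 0 j.succ := by rw [hid' e0]
    rw [hentry, hsumA, hess_cForm_0succ] at h1
    have h6 : l * (6 * a₀) ≠ 0 := by
      intro hcon
      rcases mul_eq_zero.mp hcon with h' | h'
      · exact hl0 h'
      · omega
    rcases mul_eq_zero.mp h1 with h' | h'
    · exact absurd h' h6
    · exact h'
  -- step 2 : determinant factorisation
  set M := γ.submatrix Fin.succ Fin.succ with hM
  have hdetfac : γ.det = l * M.det := by
    rw [Matrix.det_succ_row_zero, Fin.sum_univ_succ]
    have hz : ∀ j : Fin n, ((-1:ℤ)) ^ ((j.succ : Fin (n+1)) : ℕ) * γ 0 j.succ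
        * (γ.submatrix Fin.succ (Fin.succAbove j.succ)).det = 0 := by
      intro j
      rw [hv j]
      ring
    rw [Finset.sum_congr rfl (fun j _ => hz j)]
    simp [Fin.succAbove_zero, hM]
    exact Or.inl rfl
  have hlM : l * M.det = 1 := by rw [← hdetfac, hdet]
  have hlunit : l = 1 ∨ l = -1 := by
    have : IsUnit l := isUnit_iff_exists_inv.mpr ⟨M.det, hlM⟩
    exact Int.isUnit_iff.mp this
  have hll : l * l = 1 := by rcases hlunit with h | h <;> rw [h] <;> norm_num
  have hdetM : M.det = l := by
    have : l * (l * M.det) = l * 1 := by rw [hlM]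
    rw [← mul_assoc, hll, one_mul, mul_one] at this
    exact this
  -- step 3 : first row of adjugate
  have hadjrow : ∀ j, γ.adjugate 0 j = l * (1 : Matrix (Fin (n+1)) (Fin (n+1)) ℤ) 0 j := by
    intro j
    have h1 : (γ * γ.adjugate) 0 j = (1 : Matrix (Fin (n+1)) (Fin (n+1)) ℤ) 0 j := by
      rw [Matrix.mul_adjugate, hdet, one_smul]
    rw [Matrix.mul_apply] at h1
    rw [sum_head_of_succ_zero (fun p => by rw [hv p, zero_mul])] at h1
    have := congrArg (l * ·) h1
    rw [← mul_assoc, hll, one_mul] at this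
    exact this
  have hadj0 : ∀ y : Fin (n+1) → ℤ, (γ.adjugate.mulVec y) 0 = l * y 0 := by
    intro y
    show ∑ j, γ.adjugate 0 j * y j = l * y 0
    rw [sum_head_of_succ_zero (fun p => ?_)]
    · rw [hadjrow]; simp [Matrix.one_apply]
    · rw [hadjrow]
      simp [Matrix.one_apply, (Fin.succ_ne_zero p).symm]
  -- step 4 : the first column of γ away from (0,0) vanishes
  set c : Fin n → ℤ := fun p => γ p.succ 0 with hc
  have hcol : ∀ p : Fin n, γ p.succ 0 = 0 := by
    have hxi : ∀ (y' : Fin n → ℤ), Matrix.vecMul c (hess G₀ y') = 0 := by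
      intro y'
      set y : Fin (n+1) → ℤ := Fin.cons 0 y' with hy
      have hy0 : y 0 = 0 := rfl
      have hysucc : y ∘ Fin.succ = y' := by funext i; simp [hy, Fin.cons_succ]
      set A := hess (cForm a₀ G₀) y with hAdef
      have hA0 : ∀ p, A 0 p = 0 := by
        intro p
        refine Fin.cases ?_ ?_ p
        · rw [hAdef, hess_cForm_00, hy0]; ring
        · intro q; rw [hAdef, hess_cForm_0succ]
      have hAs0 : ∀ p : Fin n, A p.succ 0 = 0 := fun p => by rw [hAdef, hess_cForm_succ0]
      have hAss : ∀ p q : Fin n, A p.succ q.succ = hess G₀ y' p q := by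
        intro p q; rw [hAdef, hess_cForm_succsucc, hysucc]
      -- entries of the identity
      have hent : ∀ t : Fin (n+1), (∑ k, ∑ p, γ k 0 * A k p * γ p t)
          = hess (cForm a' G') (γ.adjugate.mulVec y) 0 t := by
        intro t
        rw [← hentry, hid' y]
      have hRHS0 : ∀ t : Fin (n+1), hess (cForm a' G') (γ.adjugate.mulVec y) 0 t = 0 := by
        intro t
        refine Fin.cases ?_ ?_ t
        · rw [hess_cForm_00, hadj0, hy0]; ring
        · intro q; rw [hess_cForm_0succ]
      have hLHS : ∀ t : Fin (n+1), (∑ k, ∑ p, γ k 0 * A k p * γ p t)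
          = ∑ q : Fin n, (∑ p : Fin n, c p * hess G₀ y' p q) * γ q.succ t := by
        intro t
        rw [sum_tail_of_head_zero (Finset.sum_eq_zero fun p _ => by rw [hA0]; ring)]
        have hinner : ∀ kk : Fin n, (∑ p, γ kk.succ 0 * A kk.succ p * γ p t)
            = ∑ q : Fin n, c kk * hess G₀ y' kk q * γ q.succ t := by
          intro kk
          rw [sum_tail_of_head_zero (by rw [hAs0]; ring)]
          refine Finset.sum_congr rfl fun q _ => ?_
          rw [hAss]
        rw [Finset.sum_congr rfl fun kk _ => hinner kk]
        rw [Finset.sum_comm]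
        refine Finset.sum_congr rfl fun q _ => ?_
        rw [Finset.sum_mul]
      have hxit : ∀ t : Fin (n+1),
          (∑ q : Fin n, (∑ p : Fin n, c p * hess G₀ y' p q) * γ q.succ t) = 0 := by
        intro t
        rw [← hLHS, hent, hRHS0]
      set ξ : Fin n → ℤ := fun q => ∑ p : Fin n, c p * hess G₀ y' p q with hxidef
      set η : Fin (n+1) → ℤ := Fin.cons 0 ξ with hetadef
      have hvecMul : Matrix.vecMul η γ = 0 := by
        funext t
        have h1 : Matrix.vecMul η γ t = ∑ k, η k * γ k t := by
          simp [Matrix.vecMul, dotProduct]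
        rw [h1, sum_tail_of_head_zero (by simp [hetadef])]
        have h2 : ∀ q : Fin n, η q.succ = ξ q := fun q => by simp [hetadef]
        rw [Finset.sum_congr rfl fun q _ => by rw [h2 q]]
        exact hxit t
      have heta0 : η = 0 := by
        have h3 : Matrix.vecMul η (γ * γ.adjugate) = 0 := by
          rw [← Matrix.vecMul_vecMul, hvecMul, Matrix.zero_vecMul]
        rwa [Matrix.mul_adjugate, hdet, one_smul, Matrix.vecMul_one] at h3
      funext q
      have := congrFun heta0 q.succ
      simpa [hetadef, hxidef, Matrix.vecMul, dotProduct] using this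
    intro p
    obtain ⟨y₀, hy₀⟩ := hndG₀
    have := vecMul_eq_zero_of_det_ne_zero hy₀ (hxi y₀)
    exact congrFun this p
  -- step 5 : computing the action of the block matrix
  have hform : matAct γ (cForm a₀ G₀) = cForm (l ^ 3 * a₀) (matAct M G₀) := by
    unfold matAct cForm
    rw [map_add, map_mul, bind₁_C_right, map_pow, bind₁_X_right, bind₁_rename]
    have hg0 : (∑ j, C (γ 0 j) * X j) = C l * (X 0 : MvPolynomial (Fin (n+1)) ℤ) := by
      rw [sum_head_of_succ_zero (fun p => by rw [hv p]; simp)]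
    have hgs : ((fun i => ∑ j, C (γ i j) * X j) ∘ Fin.succ)
        = fun i : Fin n => ∑ j : Fin n, C (M i j) * (X j.succ : MvPolynomial (Fin (n+1)) ℤ) := by
      funext i
      simp only [Function.comp_apply]
      rw [sum_tail_of_head_zero ?_]
      · rfl
      · rw [hcol i]; simp
    rw [hg0, hgs]
    have hren : rename Fin.succ (bind₁ (fun i => ∑ j, C (M i j) * X j) G₀)
        = bind₁ (fun i : Fin n => ∑ j : Fin n, C (M i j)
            * (X j.succ : MvPolynomial (Fin (n+1)) ℤ)) G₀ := by
      rw [rename_bind₁]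
      have hfun : (fun i => rename Fin.succ (∑ j : Fin n, C (M i j) * X j))
          = fun i : Fin n => ∑ j : Fin n, C (M i j)
              * (X j.succ : MvPolynomial (Fin (n+1)) ℤ) := by
        funext i
        simp
      rw [hfun]
    rw [hren]
    congr 1
    rw [mul_pow, ← map_pow, ← mul_assoc, ← map_mul, mul_comm a₀ (l ^ 3)]
  rw [hform] at heq
  obtain ⟨ha, hG⟩ := cForm_eq_iff heq
  refine ⟨l, M, hlunit, hdetM, ?_, hG.symm⟩
  rw [← ha]
  rcases hlunit with h | h <;> rw [h] <;> ring


lemma n_ne_zero_of_det_neg_one {k : ℕ} (M : Matrix (Fin k) (Fin k) ℤ)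
    (h : M.det = -1) : k ≠ 0 := by
  rintro rfl
  rw [Matrix.det_fin_zero] at h
  omega

def sgn (n : ℕ) : Matrix (Fin n) (Fin n) ℤ :=
  Matrix.diagonal (fun j => if (j : ℕ) = 0 then -1 else 1)

lemma sgn_mul_self : sgn n * sgn n = 1 := by
  unfold sgn
  rw [Matrix.diagonal_mul_diagonal]
  have : (fun j : Fin n => (if (j:ℕ) = 0 then (-1:ℤ) else 1) * (if (j:ℕ) = 0 then -1 else 1))
      = fun _ => (1:ℤ) := by
    funext j
    by_cases hj : (j:ℕ) = 0 <;> simp [hj]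
  rw [this, Matrix.diagonal_one]

lemma sgn_det_ne_zero : (sgn n).det ≠ 0 := by
  unfold sgn
  rw [Matrix.det_diagonal]
  rw [Finset.prod_ne_zero_iff]
  intro j _
  by_cases hj : (j:ℕ) = 0 <;> simp [hj]

lemma sgn_det_of_ne_zero (hn : n ≠ 0) : (sgn n).det = -1 := by
  unfold sgn
  rw [Matrix.det_diagonal]
  have h0 : (0:ℕ) < n := Nat.pos_of_ne_zero hn
  rw [Finset.prod_eq_single (⟨0, h0⟩ : Fin n)]
  · simp
  · intro j _ hj
    have : (j : ℕ) ≠ 0 := by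
      intro hc
      apply hj
      apply Fin.ext
      simpa using hc
    simp [this]
  · intro h; exact absurd (Finset.mem_univ _) h

lemma smooth_Gdef : smoothHyp (∑ j : Fin n, (X j : MvPolynomial (Fin n) ℂ) ^ 3) := by
  intro x hx
  funext i
  show x i = 0
  have hpd : pderiv i (∑ j : Fin n, (X j : MvPolynomial (Fin n) ℂ) ^ 3)
      = ((3:ℕ) : MvPolynomial (Fin n) ℂ) * X i ^ 2 * 1 := by
    rw [map_sum, Finset.sum_eq_single i]
    · rw [pderiv_pow, pderiv_X_self]
    · intro j _ hj
      rw [pderiv_pow, pderiv_X_of_ne hj, mul_zero]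
    · intro h; exact absurd (Finset.mem_univ i) h
  have := hx i
  rw [hpd] at this
  simp only [map_mul, map_pow, eval_X, map_one, mul_one, map_natCast] at this
  have h3 : ((3:ℕ):ℂ) ≠ 0 := by norm_num
  have := mul_eq_zero.mp this
  rcases this with h | h
  · exact absurd h h3
  · exact pow_eq_zero_iff (by norm_num) |>.mp h

lemma Gdef_homog : (∑ j : Fin n, (X j : MvPolynomial (Fin n) ℤ) ^ 3).IsHomogeneous 3 :=
  IsHomogeneous.sum _ _ _ fun j _ => isHomogeneous_X_pow _ _


lemma det_map_cast_ne_zero {k : ℕ} (A : Matrix (Fin k) (Fin k) ℤ) (h : A.det ≠ 0) :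
    (A.map ⇑(Int.castRingHom ℂ)).det ≠ 0 := by
  have hdet := RingHom.map_det (Int.castRingHom ℂ) A
  rw [RingHom.mapMatrix_apply] at hdet
  have h2 : ((A.det : ℤ) : ℂ) ≠ 0 := Int.cast_ne_zero.mpr h
  rw [← hdet]
  simpa using h2

end Stmt12Aux

open Stmt12Aux

/-- Proposition 3.22. Let `F ∈ ℤ[x₀,…,xₙ]` be a non-degenerate
cubic form with `{F = 0}` smooth and fix a nonzero integer `r`. Then there are
finitely many pairs `(aᵢ, Gᵢ)` such that whenever an integral matrix `T` with
`det T = r` satisfies `T·F = a·x₀³ + G(x₁,…,xₙ)` with `G` a non-degenerate cubic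
form, we have `a = aᵢ` and `G = M·Gᵢ` for some `i` and `M ∈ SL(n, ℤ)`; moreover
each `{Gᵢ = 0}` is smooth. -/
theorem stmt12 {n : ℕ} (F : MvPolynomial (Fin (n + 1)) ℤ)
    (hF3 : F.IsHomogeneous 3) (hnd : nondeg F)
    (hsm : smoothHyp (F.map (Int.castRingHom ℂ))) (r : ℤ) (hr : r ≠ 0) :
    ∃ (k : ℕ) (a : Fin k → ℤ) (G : Fin k → MvPolynomial (Fin n) ℤ),
      (∀ i, (G i).IsHomogeneous 3 ∧ smoothHyp ((G i).map (Int.castRingHom ℂ))) ∧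
      ∀ (T : Matrix (Fin (n + 1)) (Fin (n + 1)) ℤ) (a' : ℤ)
        (G' : MvPolynomial (Fin n) ℤ),
        T.det = r → G'.IsHomogeneous 3 → nondeg G' →
        matAct T F = C a' * X 0 ^ 3 + rename Fin.succ G' →
        ∃ (i : Fin k) (M : Matrix (Fin n) (Fin n) ℤ), M.det = 1 ∧
          a' = a i ∧ G' = matAct M (G i) := by
  classical
  set N : ℕ := (2 * r).natAbs with hNdef
  have hN : N ≠ 0 := Int.natAbs_ne_zero.mpr (by omega)
  haveI : NeZero N := ⟨hN⟩
  set ρ : Matrix (Fin (n+1)) (Fin (n+1)) ℤ → Matrix (Fin (n+1)) (Fin (n+1)) (ZMod N) :=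
    fun T => T.map (fun z : ℤ => (z : ZMod N)) with hρ
  set Valid : Matrix (Fin (n+1)) (Fin (n+1)) (ZMod N) → Prop := fun mres =>
    ∃ q : (Matrix (Fin (n+1)) (Fin (n+1)) ℤ) × ℤ × MvPolynomial (Fin n) ℤ,
      ρ q.1 = mres ∧ q.1.det = r ∧ q.2.2.IsHomogeneous 3 ∧ nondeg q.2.2 ∧
        matAct q.1 F = cForm q.2.1 q.2.2 with hValid
  set Gdef : MvPolynomial (Fin n) ℤ := ∑ j : Fin n, X j ^ 3 with hGdef
  set I := Matrix (Fin (n+1)) (Fin (n+1)) (ZMod N) × Bool with hI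
  set pairF : I → ℤ × MvPolynomial (Fin n) ℤ := fun q =>
    if h : Valid q.1 then
      (if q.2 then (- h.choose.2.1, matAct (sgn n) h.choose.2.2)
        else (h.choose.2.1, h.choose.2.2))
    else (0, Gdef) with hpairF
  set e : I ≃ Fin (Fintype.card I) := Fintype.equivFin I with he
  refine ⟨Fintype.card I, fun i => (pairF (e.symm i)).1,
    fun i => (pairF (e.symm i)).2, ?_, ?_⟩
  · -- homogeneity and smoothness of all list entries
    intro i
    show ((pairF (e.symm i)).2).IsHomogeneous 3 ∧
      smoothHyp (map (Int.castRingHom ℂ) ((pairF (e.symm i)).2))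
    obtain ⟨mres, b⟩ : I := e.symm i
    by_cases h : Valid mres
    · obtain ⟨hρ₀, hdet₀, h₀3, hnd₀, heq₀⟩ := h.choose_spec
      have hdetC : ((h.choose.1.map ⇑(Int.castRingHom ℂ)).det) ≠ 0 :=
        det_map_cast_ne_zero _ (by rw [hdet₀]; exact hr)
      have hsmooth₀ : smoothHyp (map (Int.castRingHom ℂ)
          (cForm h.choose.2.1 h.choose.2.2)) := by
        rw [← heq₀, map_matAct]
        exact smoothHyp_matAct hdetC hsm
      rw [map_cForm] at hsmooth₀
      have hres := cForm_smooth (h₀3.map _) hsmooth₀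
      cases b with
      | false =>
          have hpf : pairF (mres, false) = (h.choose.2.1, h.choose.2.2) := by
            simp only [hpairF]
            rw [dif_pos h, if_neg (by simp)]
          rw [hpf]
          exact ⟨h₀3, hres.2⟩
      | true =>
          have hpf : pairF (mres, true)
              = (- h.choose.2.1, matAct (sgn n) h.choose.2.2) := by
            simp only [hpairF]
            rw [dif_pos h, if_pos (by simp)]
          rw [hpf]
          constructor
          · exact matAct_isHomogeneous _ h₀3
          · rw [map_matAct]
            apply smoothHyp_matAct
            · exact det_map_cast_ne_zero _ (sgn_det_ne_zero (n := n))
            · exact hres.2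
    · have hpf : pairF (mres, b) = (0, Gdef) := by
        simp only [hpairF]
        rw [dif_neg h]
      rw [hpf]
      refine ⟨Gdef_homog, ?_⟩
      rw [hGdef]
      have hmg : map (Int.castRingHom ℂ) (∑ j : Fin n, (X j : MvPolynomial (Fin n) ℤ) ^ 3)
          = ∑ j : Fin n, (X j : MvPolynomial (Fin n) ℂ) ^ 3 := by
        simp
      rw [hmg]
      exact smooth_Gdef
  · -- main statement
    intro T a' G' hdetT hG'3 hndG' heqT
    have heqT' : matAct T F = cForm a' G' := heqT
    set mres := ρ T with hmres
    have hval : Valid mres := ⟨(T, a', G'), rfl, hdetT, hG'3, hndG', heqT'⟩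
    obtain ⟨hρ₀, hdet₀, h₀3, hnd₀, heq₀⟩ := hval.choose_spec
    set T₀ := hval.choose.1 with hT₀
    set a₀ := hval.choose.2.1 with ha₀def
    set G₀ := hval.choose.2.2 with hG₀def
    have hdvd : ∀ i j, (2*r) ∣ (T i j - T₀ i j) := by
      intro i j
      have hcast : ((T i j : ZMod N)) = ((T₀ i j : ZMod N)) := by
        have h1 := congrArg (fun Mt => Mt i j) hρ₀
        simpa [hρ, Matrix.map_apply, hmres] using h1.symm
      have h2 : ((T i j - T₀ i j : ℤ) : ZMod N) = 0 := by
        push_cast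
        rw [hcast]
        ring
      have hd := (ZMod.intCast_zmod_eq_zero_iff_dvd _ N).mp h2
      rwa [hNdef, Int.natCast_natAbs, abs_dvd] at hd
    set S : Matrix (Fin (n+1)) (Fin (n+1)) ℤ :=
      Matrix.of (fun i j => (T i j - T₀ i j) / (2*r)) with hS
    have hTS : T = T₀ + (2*r) • S := by
      ext i j
      simp only [Matrix.add_apply, Matrix.smul_apply, hS, Matrix.of_apply, smul_eq_mul]
      rw [Int.mul_ediv_cancel' (hdvd i j)]
      ring
    set γ : Matrix (Fin (n+1)) (Fin (n+1)) ℤ := 1 + (2:ℤ) • (T₀.adjugate * S) with hγdef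
    have hγ : T₀ * γ = T := by
      rw [hγdef, Matrix.mul_add, mul_one, hTS]
      congr 1
      rw [Matrix.mul_smul, ← Matrix.mul_assoc, Matrix.mul_adjugate, hdet₀,
        Matrix.smul_mul, one_mul, smul_smul]
    have hdetγ : γ.det = 1 := by
      have h1 : (T₀ * γ).det = T.det := by rw [hγ]
      rw [Matrix.det_mul, hdet₀, hdetT] at h1
      have h2 : r * γ.det = r * 1 := by rw [h1, mul_one]
      exact mul_left_cancel₀ hr h2
    have hγ00 : γ 0 0 ≠ 0 := by
      have h1 : γ 0 0 = 1 + 2 * (T₀.adjugate * S) 0 0 := by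
        rw [hγdef, Matrix.add_apply, Matrix.one_apply_eq, Matrix.smul_apply, smul_eq_mul]
      rw [h1]
      omega
    have heqγ : matAct γ (cForm a₀ G₀) = cForm a' G' := by
      rw [← heq₀, matAct_matAct, hγ, heqT']
    have ha₀ : a₀ ≠ 0 := by
      have hdetC : ((T₀.map ⇑(Int.castRingHom ℂ)).det) ≠ 0 :=
        det_map_cast_ne_zero _ (by rw [hdet₀]; exact hr)
      have hsmooth₀ : smoothHyp (map (Int.castRingHom ℂ) (cForm a₀ G₀)) := by
        rw [← heq₀, map_matAct]
        exact smoothHyp_matAct hdetC hsm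
      rw [map_cForm] at hsmooth₀
      have hane := (cForm_smooth (h₀3.map _) hsmooth₀).1
      intro hcon
      apply hane
      rw [hcon]
      simp
    obtain ⟨l, M, hlunit, hdetM, ha', hG'⟩ :=
      core a₀ a' G₀ G' γ hdetγ hγ00 ha₀ h₀3 hnd₀ heqγ
    have hpf_false : pairF (mres, false) = (a₀, G₀) := by
      simp only [hpairF]
      rw [dif_pos hval, if_neg (by simp)]
    have hpf_true : pairF (mres, true) = (- a₀, matAct (sgn n) G₀) := by
      simp only [hpairF]
      rw [dif_pos hval, if_pos (by simp)]
    rcases hlunit with hl1 | hlm1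
    · refine ⟨e (mres, false), M, by rw [hdetM, hl1], ?_, ?_⟩
      · show a' = (pairF (e.symm (e (mres, false)))).1
        rw [Equiv.symm_apply_apply, hpf_false, ha', hl1, one_mul]
      · show G' = matAct M (pairF (e.symm (e (mres, false)))).2
        rw [Equiv.symm_apply_apply, hpf_false]
        exact hG'
    · have hn0 : n ≠ 0 := n_ne_zero_of_det_neg_one M (by rw [hdetM, hlm1])
      have hσdet : (sgn n).det = -1 := sgn_det_of_ne_zero hn0
      refine ⟨e (mres, true), sgn n * M, ?_, ?_, ?_⟩
      · rw [Matrix.det_mul, hσdet, hdetM, hlm1]; ring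
      · show a' = (pairF (e.symm (e (mres, true)))).1
        rw [Equiv.symm_apply_apply, hpf_true, ha', hlm1]
        ring
      · show G' = matAct (sgn n * M) (pairF (e.symm (e (mres, true)))).2
        rw [Equiv.symm_apply_apply, hpf_true]
        show G' = matAct (sgn n * M) (matAct (sgn n) G₀)
        rw [matAct_matAct, ← Matrix.mul_assoc, sgn_mul_self, Matrix.one_mul]
        exact hG'
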